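/- Let H be a finite-dimensional vector space over a (skew) field 𝕂 with a non-singular sesquilinear form ⟨·,·⟩. Suppose B ⊆ H is a subspace containing linearly independent vectors L₁,…,L_k with ⟨Lᵢ,Lⱼ⟩ = 0 for all i,j, and suppose there exist δ₁,…,δ_k ∈ H with ⟨δᵢ, Lⱼ⟩ = δᵢⱼ (Kronecker delta). Let U₁ = span{L₁,…,L_k} and U₂ = span{δ₁,…,δ_k} ∩ B. If B = B₀ ⊕ U₁ ⊕ U₂ for some subspace B₀ lying in the radical of the restricted pairing, and the form restricted to the quotient B/B₀ is non-singular, then dim(B/B₀) = 2·dim(U₂) and B/B₀ contains an isotropic subspace of dimension dim(U₂). -/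

import Mathlib

open Module

/-- linear-algebra core of Theorem 3.6: `H` finite-dimensional with a
non-singular bilinear pairing `Φ`; `B ⊆ H` a subspace containing an isotropic family
`L₁,…,L_k` (linearly independent, pairwise pairing to zero) admitting duals
`δ₁,…,δ_k ∈ H` with `Φ(δᵢ, Lⱼ) = δᵢⱼ`.  Let `U₁ = span{Lᵢ}`, `U₂ = span{δᵢ} ⊓ B`.  If
`B = B₀ ⊕ U₁ ⊕ U₂` with `B₀` in the radical of the pairing restricted to `B`, and the
induced pairing on `B/B₀` is non-singular, then `dim(B/B₀) = 2·dim U₂`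
(i.e. `dim B = dim B₀ + 2 dim U₂`) and `B/B₀` contains an isotropic subspace of
dimension `dim U₂` (an isotropic `W ≤ B` with `W ⊓ B₀ = ⊥`). -/
theorem stmt_10 {𝕂 H : Type*} [Field 𝕂] [AddCommGroup H] [Module 𝕂 H]
    [FiniteDimensional 𝕂 H]
    (Φ : H →ₗ[𝕂] H →ₗ[𝕂] 𝕂)
    (hnonsing : ∀ x, (∀ y, Φ x y = 0) → x = 0)
    (k : ℕ) (L δ : Fin k → H) (hLindep : LinearIndependent 𝕂 L)
    (B B₀ : Submodule 𝕂 H)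
    (hLB : ∀ i, L i ∈ B)
    (hLL : ∀ i j, Φ (L i) (L j) = 0)
    (hδL : ∀ i j, Φ (δ i) (L j) = if i = j then 1 else 0)
    (U₁ U₂ : Submodule 𝕂 H)
    (hU₁ : U₁ = Submodule.span 𝕂 (Set.range L))
    (hU₂ : U₂ = Submodule.span 𝕂 (Set.range δ) ⊓ B)
    (hdecomp : B₀ ⊔ U₁ ⊔ U₂ = B)
    (hind₁ : B₀ ⊓ (U₁ ⊔ U₂) = ⊥) (hind₂ : U₁ ⊓ U₂ = ⊥)
    (hrad : ∀ x ∈ B₀, ∀ y ∈ B, Φ x y = 0 ∧ Φ y x = 0)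
    (hquot_nonsing : ∀ x ∈ B, (∀ y ∈ B, Φ x y = 0) → x ∈ B₀) :
    finrank 𝕂 B = finrank 𝕂 B₀ + 2 * finrank 𝕂 U₂ ∧
    ∃ W : Submodule 𝕂 H, W ≤ B ∧ finrank 𝕂 W = finrank 𝕂 U₂ ∧
      W ⊓ B₀ = ⊥ ∧ ∀ x ∈ W, ∀ y ∈ W, Φ x y = 0 := by
  classical
  have hB₀B : B₀ ≤ B := hdecomp ▸ le_sup_of_le_left le_sup_left
  have hU₁B : U₁ ≤ B := hdecomp ▸ le_sup_of_le_left le_sup_right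
  have hU₂B : U₂ ≤ B := hdecomp ▸ le_sup_right
  have hB₀U₁ : B₀ ⊓ U₁ = ⊥ := by
    rw [← le_bot_iff, ← hind₁]; exact inf_le_inf_left _ le_sup_left
  -- pairing of U₁ elements with L j vanishes
  have hU₁L : ∀ x ∈ U₁, ∀ j, Φ x (L j) = 0 := by
    intro x hx j
    rw [hU₁] at hx
    obtain ⟨c, rfl⟩ := (Submodule.mem_span_range_iff_exists_fun 𝕂).1 hx
    simp [map_sum, LinearMap.sum_apply, hLL]
  have hU₁U₁ : ∀ x ∈ U₁, ∀ y ∈ U₁, Φ x y = 0 := by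
    intro x hx y hy
    rw [hU₁] at hy
    obtain ⟨c, rfl⟩ := (Submodule.mem_span_range_iff_exists_fun 𝕂).1 hy
    rw [hU₁] at hx
    simp only [map_sum, map_smul, smul_eq_mul]
    refine Finset.sum_eq_zero fun j _ => ?_
    rw [hU₁L _ (hU₁ ▸ hx) j, mul_zero]

  -- the restricted bilinear form on B
  set ψ : ↥B →ₗ[𝕂] ↥B →ₗ[𝕂] 𝕂 := Φ.compl₁₂ B.subtype B.subtype with hψdef
  have hkψ : LinearMap.ker ψ = B₀.comap B.subtype := by
    ext b
    simp only [LinearMap.mem_ker, Submodule.mem_comap, Submodule.subtype_apply]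
    constructor
    · intro hb
      exact hquot_nonsing b.1 b.2 fun y hy => LinearMap.ext_iff.mp hb ⟨y, hy⟩
    · intro hb
      ext b'
      exact (hrad b.1 hb b'.1 b'.2).1
  have hkfliple : B₀.comap B.subtype ≤ LinearMap.ker ψ.flip := by
    intro b hb
    rw [LinearMap.mem_ker]
    ext b'
    exact (hrad b.1 hb b'.1 b'.2).2
  have hrankflip : finrank 𝕂 (LinearMap.range ψ.flip)
      = finrank 𝕂 (↥B ⧸ LinearMap.ker ψ) := by
    rw [← LinearMap.dualAnnihilator_ker_eq_range_flip]
    exact (LinearEquiv.finrank_eq (Subspace.quotEquivAnnihilator (LinearMap.ker ψ))).symm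
  have hkflip : LinearMap.ker ψ.flip = B₀.comap B.subtype := by
    refine (Submodule.eq_of_le_of_finrank_le hkfliple ?_).symm
    have h1 := LinearMap.finrank_range_add_finrank_ker ψ.flip
    have h2 := Submodule.finrank_quotient_add_finrank (LinearMap.ker ψ)
    rw [hrankflip] at h1
    rw [← hkψ]
    omega
  have hright : ∀ y ∈ B, (∀ b ∈ B, Φ b y = 0) → y ∈ B₀ := by
    intro y hy h
    have hm : (⟨y, hy⟩ : ↥B) ∈ LinearMap.ker ψ.flip := by
      rw [LinearMap.mem_ker]
      ext b
      exact h b.1 b.2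
    rw [hkflip] at hm
    exact hm

  -- linear combination map and the pairing with the L's
  set T : (Fin k → 𝕂) →ₗ[𝕂] H := Fintype.linearCombination 𝕂 L with hTdef
  have hTapp : ∀ c, T c = ∑ i, c i • L i := fun c => rfl
  set P : ↥B →ₗ[𝕂] (Fin k → 𝕂) →ₗ[𝕂] 𝕂 := Φ.compl₁₂ B.subtype T with hPdef
  have hPinj : Function.Injective P.flip := by
    rw [← LinearMap.ker_eq_bot, eq_bot_iff]
    intro c hc
    rw [LinearMap.mem_ker] at hc
    have hTc : T c ∈ U₁ := by
      rw [hU₁]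
      exact (Submodule.mem_span_range_iff_exists_fun 𝕂).2 ⟨c, (hTapp c).symm⟩
    have hTc0 : T c ∈ B₀ := by
      refine hright (T c) (hU₁B hTc) fun b hb => ?_
      exact LinearMap.ext_iff.mp hc ⟨b, hb⟩
    have hTz : T c = 0 := by
      have : T c ∈ B₀ ⊓ U₁ := ⟨hTc0, hTc⟩
      rwa [hB₀U₁, Submodule.mem_bot] at this
    have hc0 := Fintype.linearIndependent_iff.1 hLindep c (by rw [← hTapp]; exact hTz)
    exact Submodule.mem_bot _ |>.2 (funext hc0)
  have hPsurj : Function.Surjective P := LinearMap.flip_injective_iff₁.mp hPinj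
  have hsurj : ∀ v : Fin k → 𝕂, ∃ b ∈ B, ∀ j, Φ b (L j) = v j := by
    intro v
    obtain ⟨b, hb⟩ := hPsurj (∑ j, v j • LinearMap.proj j)
    refine ⟨b.1, b.2, fun j => ?_⟩
    have hj := LinearMap.ext_iff.mp hb (Pi.single j 1)
    have hT1 : T (Pi.single j 1) = L j := by
      rw [hTapp]
      simp [Pi.single_apply, ite_smul]
    have hlhs : P b (Pi.single j 1) = Φ b.1 (L j) := by
      simp only [hPdef, LinearMap.compl₁₂_apply, Submodule.subtype_apply, hT1]
    rw [hlhs] at hj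
    rw [hj]
    simp [Pi.single_apply, mul_ite]
  -- injectivity on span of δ
  have hinjδ : ∀ x ∈ Submodule.span 𝕂 (Set.range δ), (∀ j, Φ x (L j) = 0) → x = 0 := by
    intro x hx h
    obtain ⟨c, rfl⟩ := (Submodule.mem_span_range_iff_exists_fun 𝕂).1 hx
    have hc : ∀ j, c j = 0 := by
      intro j
      have hj := h j
      simpa [hδL, mul_ite, Finset.sum_ite_eq'] using hj
    simp [hc]
  -- the comparison map g₂ : U₂ → 𝕂^k
  set g₂ : ↥U₂ →ₗ[𝕂] (Fin k → 𝕂) :=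
    LinearMap.pi (fun j => (Φ.flip (L j)).comp U₂.subtype) with hg₂def
  have hg₂app : ∀ (x : ↥U₂) j, g₂ x j = Φ x.1 (L j) := fun x j => rfl
  have hg₂inj : Function.Injective g₂ := by
    rw [← LinearMap.ker_eq_bot, eq_bot_iff]
    intro x hx
    rw [LinearMap.mem_ker] at hx
    have hx2 : (x : H) ∈ Submodule.span 𝕂 (Set.range δ) ⊓ B := by
      rw [← hU₂]; exact x.2
    have hxδ : x.1 ∈ Submodule.span 𝕂 (Set.range δ) := hx2.1
    have : x.1 = 0 := hinjδ x.1 hxδ fun j => by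
      rw [← hg₂app x j, hx]; rfl
    exact Submodule.mem_bot _ |>.2 (Subtype.ext this)
  have hU₁0 : ∀ a ∈ B₀ ⊔ U₁, ∀ j, Φ a (L j) = 0 := by
    intro a ha j
    obtain ⟨p, hp, q, hq, rfl⟩ := Submodule.mem_sup.1 ha
    rw [map_add, LinearMap.add_apply, (hrad p hp (L j) (hLB j)).1, hU₁L q hq j, add_zero]
  have hg₂surj : Function.Surjective g₂ := by
    intro v
    obtain ⟨b, hbB, hbv⟩ := hsurj v
    have : b ∈ B₀ ⊔ U₁ ⊔ U₂ := hdecomp ▸ hbB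
    obtain ⟨a, ha, u, hu, rfl⟩ := Submodule.mem_sup.1 this
    refine ⟨⟨u, hu⟩, ?_⟩
    funext j
    rw [hg₂app]
    have := hbv j
    rw [map_add, LinearMap.add_apply, hU₁0 a ha j, zero_add] at this
    exact this
  have hU₂k : finrank 𝕂 U₂ = k := by
    rw [LinearEquiv.finrank_eq (LinearEquiv.ofBijective g₂ ⟨hg₂inj, hg₂surj⟩)]
    exact Module.finrank_fin_fun 𝕂

  have hU₁k : finrank 𝕂 U₁ = k := by
    rw [hU₁, finrank_span_eq_card hLindep, Fintype.card_fin]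
  have hsum2 : (B₀ ⊔ U₁) ⊓ U₂ = ⊥ := by
    rw [eq_bot_iff]
    rintro x hx
    rw [Submodule.mem_inf] at hx
    obtain ⟨hx1, hx2⟩ := hx
    obtain ⟨p, hp, q, hq, rfl⟩ := Submodule.mem_sup.1 hx1
    have hpU : p ∈ U₁ ⊔ U₂ := by
      have heq : p = (p + q) - q := by abel
      rw [heq]
      exact Submodule.sub_mem _ (Submodule.mem_sup_right hx2) (Submodule.mem_sup_left hq)
    have hp0 : p = 0 := by
      have hm : p ∈ B₀ ⊓ (U₁ ⊔ U₂) := ⟨hp, hpU⟩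
      rwa [hind₁, Submodule.mem_bot] at hm
    have hm : p + q ∈ U₁ ⊓ U₂ := ⟨by rw [hp0, zero_add]; exact hq, hx2⟩
    rwa [hind₂] at hm
  have hd1 : finrank 𝕂 B = finrank 𝕂 ↥(B₀ ⊔ U₁) + finrank 𝕂 U₂ := by
    have h := Submodule.finrank_sup_add_finrank_inf_eq (B₀ ⊔ U₁) U₂
    rw [hsum2, hdecomp] at h
    have h2 : finrank 𝕂 B = finrank 𝕂 ↥(B₀ ⊔ U₁) + finrank 𝕂 U₂ := by simpa using h
    exact h2
  have hd2 : finrank 𝕂 ↥(B₀ ⊔ U₁) = finrank 𝕂 B₀ + finrank 𝕂 U₁ := by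
    have h := Submodule.finrank_sup_add_finrank_inf_eq B₀ U₁
    rw [hB₀U₁] at h
    simpa using h
  constructor
  · rw [hd1, hd2, hU₁k, hU₂k]; ring
  · exact ⟨U₁, hU₁B, by rw [hU₁k, hU₂k], by rw [inf_comm]; exact hB₀U₁, hU₁U₁⟩
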